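/- Let p₀, p₁, …, p_m be points in ℝ² with pᵢ ≠ pᵢ₊₁ for every i, and suppose the polygonal path on p₀, …, p_m has increasing chords. Then for every interior index i with 1 ≤ i ≤ m−1, the angle ∠(p_{i−1}, p_i, p_{i+1}) is at least π/2. -/

import Mathlib

/-- The point of the polygonal path `p 0, p 1, …` lying on segment `i`
(from `p i` to `p (i+1)`) at fraction `s ∈ [0,1]`. -/
noncomputable def polyPt (p : ℕ → EuclideanSpace ℝ (Fin 2)) (i : ℕ) (s : ℝ) :
    EuclideanSpace ℝ (Fin 2) :=
  (1 - s) • p i + s • p (i + 1)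

/-- `(i, s)` comes no later than `(j, t)` in the lexicographic order on parameters
of points of a polygonal path. -/
def ParamLE (i : ℕ) (s : ℝ) (j : ℕ) (t : ℝ) : Prop :=
  i < j ∨ (i = j ∧ s ≤ t)

/-- The polygonal path on the points `p 0, …, p m` (with `m` segments, indexed
`0, …, m-1`) is self-approaching: for any three of its points `a, b, c` in order
along the path, `dist a c ≥ dist b c`. -/
def IsSelfApproachingPoly (m : ℕ) (p : ℕ → EuclideanSpace ℝ (Fin 2)) : Prop :=
  ∀ (i j k : ℕ) (s t u : ℝ), i < m → j < m → k < m →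
    s ∈ Set.Icc (0 : ℝ) 1 → t ∈ Set.Icc (0 : ℝ) 1 → u ∈ Set.Icc (0 : ℝ) 1 →
    ParamLE i s j t → ParamLE j t k u →
    dist (polyPt p j t) (polyPt p k u) ≤ dist (polyPt p i s) (polyPt p k u)

/-- The polygonal path on the points `p 0, …, p m` has increasing chords: for any
four of its points `a, b, c, d` in order along the path, `dist a d ≥ dist b c`. -/
def IsIncreasingChordsPoly (m : ℕ) (p : ℕ → EuclideanSpace ℝ (Fin 2)) : Prop :=
  ∀ (i j k l : ℕ) (s t u v : ℝ), i < m → j < m → k < m → l < m →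
    s ∈ Set.Icc (0 : ℝ) 1 → t ∈ Set.Icc (0 : ℝ) 1 → u ∈ Set.Icc (0 : ℝ) 1 →
    v ∈ Set.Icc (0 : ℝ) 1 →
    ParamLE i s j t → ParamLE j t k u → ParamLE k u l v →
    dist (polyPt p j t) (polyPt p k u) ≤ dist (polyPt p i s) (polyPt p l v)

open scoped RealInnerProductSpace

/-- In an increasing-chord polygonal path `p 0, …, p m`, the angle at each interior
vertex `p i` (for `1 ≤ i ≤ m - 1`) is at least `π / 2`. -/
theorem increasingChords_angle_ge_pi_div_two (m : ℕ)
    (p : ℕ → EuclideanSpace ℝ (Fin 2)) (hne : ∀ i < m, p i ≠ p (i + 1))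
    (hic : IsIncreasingChordsPoly m p) :
    ∀ i : ℕ, 1 ≤ i → i + 1 ≤ m →
      Real.pi / 2 ≤ EuclideanGeometry.angle (p (i - 1)) (p i) (p (i + 1)) := by
  intro i hi him
  set a := p (i - 1)
  set b := p i
  set c := p (i + 1)
  have hi1 : i - 1 + 1 = i := Nat.succ_pred_eq_of_pos hi
  have him1 : i - 1 < m := by omega
  have him2 : i < m := by omega
  have hab : a ≠ b := by
    have := hne (i - 1) him1
    rwa [hi1] at this
  -- key inequality from increasing chords
  have key : ∀ s : ℝ, s ∈ Set.Icc (0:ℝ) 1 →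
      dist b c ≤ dist ((1 - s) • a + s • b) c := by
    intro s hs
    have h := hic (i - 1) (i - 1) i i s 1 1 1 him1 him1 him2 him2 hs
      (by norm_num) (by norm_num) (by norm_num)
      (Or.inr ⟨rfl, hs.2⟩) (Or.inl (by omega)) (Or.inr ⟨rfl, le_refl _⟩)
    simpa [polyPt, hi1] using h
  -- derive inner product nonpositive
  have hinner : ⟪a - b, c - b⟫ ≤ 0 := by
    by_contra hX
    push_neg at hX
    set X := ⟪a - b, c - b⟫ with hXdef
    have hab2 : (0:ℝ) < ‖a - b‖ ^ 2 := by
      have h : a - b ≠ 0 := sub_ne_zero.2 hab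
      exact pow_pos (norm_pos_iff.mpr h) 2
    set ε : ℝ := min 1 (X / ‖a - b‖ ^ 2) with hε
    have hε0 : 0 < ε := lt_min one_pos (div_pos hX hab2)
    have hε1 : ε ≤ 1 := min_le_left _ _
    have hεX : ε ≤ X / ‖a - b‖ ^ 2 := min_le_right _ _
    have hk := key (1 - ε) ⟨by linarith, by linarith⟩
    have heq : (1 - (1 - ε)) • a + (1 - ε) • b = b + ε • (a - b) := by
      simp [smul_sub, sub_smul]
      abel
    rw [heq] at hk
    have hd1 : dist b c ^ 2 = ‖c - b‖ ^ 2 := by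
      rw [dist_eq_norm, ← norm_neg]; ring_nf; rw [neg_sub]
    have hd2 : dist (b + ε • (a - b)) c ^ 2
        = ‖c - b‖ ^ 2 - 2 * ε * X + ε ^ 2 * ‖a - b‖ ^ 2 := by
      rw [dist_eq_norm]
      have : b + ε • (a - b) - c = -((c - b) - ε • (a - b)) := by abel
      rw [this, norm_neg, ← real_inner_self_eq_norm_sq]
      rw [inner_sub_sub_self]
      rw [real_inner_self_eq_norm_sq, real_inner_self_eq_norm_sq,
        real_inner_smul_right, real_inner_smul_left, norm_smul, mul_pow]
      have hcomm : (inner ℝ (c - b) (a - b) : ℝ) = X := by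
        rw [hXdef]; exact real_inner_comm _ _
      rw [hcomm]
      simp only [Real.norm_eq_abs, sq_abs]
      ring
    have hsq : dist b c ^ 2 ≤ dist (b + ε • (a - b)) c ^ 2 :=
      pow_le_pow_left₀ dist_nonneg hk 2
    rw [hd1, hd2] at hsq
    -- 2 ε X ≤ ε² ‖a-b‖²
    have h1 : 2 * ε * X ≤ ε ^ 2 * ‖a - b‖ ^ 2 := by linarith
    have h2 : ε * ‖a - b‖ ^ 2 ≤ X := (le_div_iff₀ hab2).mp hεX
    nlinarith
  -- conclude about the angle
  rw [EuclideanGeometry.angle, InnerProductGeometry.angle]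
  have : ⟪a -ᵥ b, c -ᵥ b⟫ / (‖a -ᵥ b‖ * ‖c -ᵥ b‖) ≤ 0 := by
    apply div_nonpos_of_nonpos_of_nonneg
    · exact hinner
    · positivity
  have := Real.arccos_lt_pi_div_two (x := ⟪a -ᵥ b, c -ᵥ b⟫ / (‖a -ᵥ b‖ * ‖c -ᵥ b‖))
  by_contra h
  push_neg at h
  have := this.mp h
  linarith
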